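/- arXiv:2310.09320 — 10 statements merged into one kernel-verified Lean document; each statement's English description precedes it below -/
import Mathlib

section
/- For all natural numbers n and d and every real number ρ with 0 < ρ < 1 and 0 < (d : ℝ) < ρ·n, one has log₂ (n choose d) ≥ d·(log₂((n : ℝ)/d) + log₂(e·√(1−ρ))) − 0.5·log₂ d − 0.5·log₂(1−ρ) − 1.567. -/
open Finset Real Nat

/-- Stirling upper bound: `d! ≤ e √d (d/e)^d` for `d ≥ 1`. -/
lemma fact_le_stirling (d : ℕ) (hd : 1 ≤ d) :
    (d ! : ℝ) ≤ Real.exp 1 * Real.sqrt d * ((d : ℝ) / Real.exp 1) ^ d := by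
  obtain ⟨m, rfl⟩ : ∃ m, d = m + 1 := ⟨d - 1, by omega⟩
  have h1 : Real.log (Stirling.stirlingSeq (m + 1)) ≤ Real.log (Stirling.stirlingSeq 1) := by
    have := Stirling.log_stirlingSeq'_antitone (Nat.zero_le m)
    simpa using this
  have hpos : 0 < Stirling.stirlingSeq (m + 1) := Stirling.stirlingSeq'_pos m
  have hpos1 : 0 < Stirling.stirlingSeq 1 := Stirling.stirlingSeq'_pos 0
  have h2 : Stirling.stirlingSeq (m + 1) ≤ Stirling.stirlingSeq 1 :=
    (Real.log_le_log_iff hpos hpos1).mp h1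
  rw [Stirling.stirlingSeq_one] at h2
  set d := m + 1 with hdd
  have hd0 : (0:ℝ) < d := by positivity
  have hsq : (0:ℝ) < Real.sqrt (2 * d) := by positivity
  have hpow : (0:ℝ) < ((d : ℝ) / Real.exp 1) ^ d := by positivity
  have hfac : (d ! : ℝ) = Stirling.stirlingSeq d * (Real.sqrt (2 * d) * ((d : ℝ) / Real.exp 1) ^ d) := by
    rw [Stirling.stirlingSeq]
    field_simp
  rw [hfac]
  have h3 : Stirling.stirlingSeq d * (Real.sqrt (2 * d) * ((d : ℝ) / Real.exp 1) ^ d) ≤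
      (Real.exp 1 / Real.sqrt 2) * (Real.sqrt (2 * d) * ((d : ℝ) / Real.exp 1) ^ d) := by
    apply mul_le_mul_of_nonneg_right h2 (by positivity)
  refine h3.trans_eq ?_
  have : Real.sqrt (2 * d) = Real.sqrt 2 * Real.sqrt d := Real.sqrt_mul (by norm_num) _
  rw [this]
  have h2' : Real.sqrt 2 ≠ 0 := by positivity
  field_simp

set_option maxHeartbeats 1000000 in
theorem stmt_0 (n d : ℕ) (ρ : ℝ) (hρ0 : 0 < ρ) (hρ1 : ρ < 1)
    (hd0 : 0 < (d : ℝ)) (hdn : (d : ℝ) < ρ * n) :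
    Real.logb 2 (n.choose d) ≥
      (d : ℝ) * (Real.logb 2 ((n : ℝ) / d) + Real.logb 2 (Real.exp 1 * Real.sqrt (1 - ρ)))
        - 0.5 * Real.logb 2 d - 0.5 * Real.logb 2 (1 - ρ) - 1.567 := by
  set L : ℝ := 1 - ρ with hLdef
  have hL0 : 0 < L := by simp [hLdef]; linarith
  have hn0 : (0:ℝ) < n := by nlinarith
  have hdn2 : (d : ℝ) < n := by nlinarith
  have hdltn : d < n := by exact_mod_cast hdn2
  have hd1 : 1 ≤ d := by exact_mod_cast hd0
  have hc0 : (0:ℝ) < (n.choose d : ℝ) := by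
    exact_mod_cast Nat.choose_pos hdltn.le
  have hf0 : (0:ℝ) < (d ! : ℝ) := by exact_mod_cast d.factorial_pos
  -- Step 1: ((choose * d!))^2 ≥ n^(2d) * L^(d-1)
  set m := d - 1 with hmdef
  have hdm : d = m + 1 := by omega
  have hmR : (m : ℝ) = (d : ℝ) - 1 := by
    rw [hdm]; push_cast; ring
  have hcast : ((n.descFactorial d : ℕ) : ℝ) = ∏ i ∈ range d, ((n : ℝ) - i) := by
    rw [Nat.descFactorial_eq_prod_range, Nat.cast_prod]
    apply Finset.prod_congr rfl
    intro i hi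
    have : i ≤ n := by have := Finset.mem_range.mp hi; omega
    push_cast [Nat.cast_sub this]
    ring
  set f : ℕ → ℝ := fun i => (n : ℝ) - i with hfdef
  set Q : ℝ := ∏ i ∈ range m, f (i + 1) with hQdef
  have hP : ∏ i ∈ range d, ((n : ℝ) - i) = Q * (n : ℝ) := by
    rw [hdm, Finset.prod_range_succ' (fun i => (n : ℝ) - i) m]
    simp [hQdef, hfdef]
  have hQrefl : ∏ i ∈ range m, f (m - i) = Q := by
    rw [hQdef]
    rw [← Finset.prod_range_reflect (fun i => f (i + 1)) m]
    apply Finset.prod_congr rfl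
    intro j hj
    have hjm : j < m := Finset.mem_range.mp hj
    congr 1
    omega
  have hprod : (∏ j ∈ range m, (f (j + 1) * f (m - j))) = Q * Q := by
    rw [Finset.prod_mul_distrib, hQrefl, ← hQdef]
  have hQQ : (L * (n : ℝ) ^ 2) ^ m ≤ Q * Q := by
    have hconst : (L * (n : ℝ) ^ 2) ^ m = ∏ _j ∈ range m, (L * (n : ℝ) ^ 2) := by
      rw [Finset.prod_const, Finset.card_range]
    rw [← hprod, hconst]
    apply Finset.prod_le_prod
    · intro i _; positivity
    · intro j hj
      have hjm : j < m := Finset.mem_range.mp hj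
      have hj1 : ((j + 1 : ℕ) : ℝ) = (j : ℝ) + 1 := by push_cast; ring
      have hj2 : ((m - j : ℕ) : ℝ) = (m : ℝ) - j := by
        have : j ≤ m := hjm.le
        push_cast [Nat.cast_sub this]; ring
      simp only [hfdef, hj1, hj2]
      have hab : (0:ℝ) ≤ ((j : ℝ) + 1) * ((m : ℝ) - j) := by
        apply mul_nonneg
        · positivity
        · have : (j : ℝ) ≤ (m : ℝ) := by exact_mod_cast hjm.le
          linarith
      have hsum : ((j : ℝ) + 1) + ((m : ℝ) - j) = (d : ℝ) := by
        rw [hmR]; ring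
      have hnd : (d : ℝ) * n < ρ * n * n := by
        exact mul_lt_mul_of_pos_right hdn hn0
      nlinarith [hab, hsum, hnd]
  have hstep1 : (n : ℝ) ^ (2 * d) * L ^ m ≤ ((n.choose d : ℝ) * (d ! : ℝ)) ^ 2 := by
    have hid : ((n.choose d : ℝ) * (d ! : ℝ)) = ∏ i ∈ range d, ((n : ℝ) - i) := by
      rw [← hcast, Nat.descFactorial_eq_factorial_mul_choose]
      push_cast; ring
    rw [hid, hP]
    have : (Q * (n : ℝ)) ^ 2 = Q * Q * ((n:ℝ) * n) := by ring
    rw [this]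
    calc (n : ℝ) ^ (2 * d) * L ^ m = (L * (n : ℝ) ^ 2) ^ m * ((n:ℝ) * n) := by
          rw [mul_pow, ← pow_mul, hdm]; ring_nf
      _ ≤ Q * Q * ((n:ℝ) * n) := by
          apply mul_le_mul_of_nonneg_right hQQ (by positivity)
  -- logs
  set lc := Real.log (n.choose d) with hlc
  set ln := Real.log n with hln
  set ld := Real.log d with hld
  set lL := Real.log L with hlL
  set lf := Real.log (d !) with hlf
  -- log of step 1
  have hlog1 : 2 * (d : ℝ) * ln + (m : ℝ) * lL ≤ 2 * (lc + lf) := by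
    have h := Real.log_le_log (by positivity) hstep1
    rw [Real.log_mul (by positivity) (by positivity), Real.log_pow, Real.log_pow,
      Real.log_pow, Real.log_mul hc0.ne' hf0.ne'] at h
    rw [← hlc, ← hln, ← hlL, ← hlf] at h
    push_cast at h
    linarith
  -- log of factorial bound
  have hlog2 : lf ≤ 1 + ld / 2 + (d : ℝ) * (ld - 1) := by
    have h := Real.log_le_log hf0 (fact_le_stirling d hd1)
    rw [Real.log_mul (by positivity) (by positivity),
      Real.log_mul (Real.exp_ne_zero 1) (by positivity),
      Real.log_exp, Real.log_sqrt hd0.le, Real.log_pow,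
      Real.log_div hd0.ne' (Real.exp_ne_zero 1), Real.log_exp] at h
    rw [← hlf, ← hld] at h
    linarith
  have hkey : 2 * (d:ℝ) * ln + ((d:ℝ) - 1) * lL + 2 * d - 2 - (2 * (d:ℝ) + 1) * ld ≤ 2 * lc := by
    rw [← hmR]
    linarith [hlog1, hlog2]
  -- final assembly
  have hl2 : (0:ℝ) < Real.log 2 := Real.log_pos (by norm_num)
  rw [ge_iff_le]
  simp only [Real.logb]
  rw [le_div_iff₀ hl2]
  rw [Real.log_div hn0.ne' hd0.ne',
    Real.log_mul (Real.exp_ne_zero 1) (by positivity),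
    Real.log_exp, Real.log_sqrt hL0.le]
  rw [← hlc, ← hln, ← hld, ← hlL]
  have hexpand : ((d : ℝ) * ((ln - ld) / Real.log 2 + (1 + lL / 2) / Real.log 2)
      - 0.5 * (ld / Real.log 2) - 0.5 * (lL / Real.log 2) - 1.567) * Real.log 2
      = (d : ℝ) * (ln - ld) + (d : ℝ) * (1 + lL / 2) - 0.5 * ld - 0.5 * lL
        - 1.567 * Real.log 2 := by
    field_simp
  rw [hexpand]
  have hl2' : 0.6931471803 < Real.log 2 := Real.log_two_gt_d9
  linarith [hkey, hl2']
end

section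
/- For all natural numbers n and d with 0 < d and 2·d ≤ n, writing r = (n : ℝ)/d, one has log₂ (n choose d) ≥ d·(log₂ r + (r − 1)·log₂(r/(r − 1))) − 0.5·log₂ d − 1.5. -/
open Real Stirling

lemma sqrtpi_le_stirlingSeq {n : ℕ} (hn : 1 ≤ n) : √π ≤ stirlingSeq n := by
  obtain ⟨m, rfl⟩ := Nat.exists_eq_add_of_le hn
  have h := Stirling.stirlingSeq'_antitone.le_of_tendsto
    (Stirling.tendsto_stirlingSeq_sqrt_pi.comp (Filter.tendsto_add_atTop_nat 1)) m
  simpa [Function.comp, Nat.succ_eq_add_one, Nat.add_comm] using h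

lemma stirlingSeq_le_of_two_le {k : ℕ} (hk : 2 ≤ k) : stirlingSeq k ≤ exp 1 ^ 2 / 4 := by
  have h2 : stirlingSeq 2 = exp 1 ^ 2 / 4 := by
    have h4 : √(2 * ((2:ℕ):ℝ)) = 2 := by
      rw [show (2 * ((2:ℕ):ℝ)) = 2^2 by norm_num, Real.sqrt_sq (by norm_num)]
    rw [stirlingSeq, h4]
    rw [show (Nat.factorial 2 : ℝ) = 2 by norm_num [Nat.factorial]]
    rw [div_pow]
    field_simp
    ring
  calc stirlingSeq k ≤ stirlingSeq 2 := by
        obtain ⟨m, rfl⟩ := Nat.exists_eq_add_of_le hk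
        rw [show 2 + m = (m+1) + 1 by omega]
        exact Stirling.stirlingSeq'_antitone (show 1 ≤ m + 1 by omega)
    _ = _ := h2

lemma fact_ge (n : ℕ) (hn : 1 ≤ n) :
    √π * (√(2*(n:ℝ)) * ((n:ℝ)/exp 1)^n) ≤ (n.factorial : ℝ) := by
  have hn0 : (0:ℝ) < n := by exact_mod_cast hn
  have hD : (0:ℝ) < √(2*(n:ℝ)) * ((n:ℝ)/exp 1)^n := by positivity
  have h := sqrtpi_le_stirlingSeq hn
  rw [stirlingSeq, le_div_iff₀ hD] at h
  exact h

lemma fact_le (k : ℕ) (hk : 2 ≤ k) :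
    (k.factorial : ℝ) ≤ exp 1 ^ 2 / 4 * (√(2*(k:ℝ)) * ((k:ℝ)/exp 1)^k) := by
  have hk0 : (0:ℝ) < k := by exact_mod_cast Nat.lt_of_lt_of_le (by norm_num) hk
  have hD : (0:ℝ) < √(2*(k:ℝ)) * ((k:ℝ)/exp 1)^k := by positivity
  have h := stirlingSeq_le_of_two_le hk
  rw [stirlingSeq, div_le_iff₀ hD] at h
  exact h

lemma log_term (m : ℕ) (hm : 1 ≤ m) :
    Real.log (√(2*(m:ℝ)) * ((m:ℝ)/Real.exp 1)^m)
      = 0.5*(Real.log 2 + Real.log m) + m*(Real.log m - 1) := by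
  have hm0 : (0:ℝ) < m := by exact_mod_cast hm
  rw [Real.log_mul (by positivity) (by positivity), Real.log_sqrt (by positivity),
    Real.log_mul (by norm_num) hm0.ne', Real.log_pow,
    Real.log_div hm0.ne' (Real.exp_ne_zero 1), Real.log_exp]
  ring

lemma numeric : (4:ℝ) ≤ Real.log (√π) + 5 * Real.log 2 := by
  have h1 : (1.77:ℝ) ≤ √π := by
    rw [show (1.77:ℝ) = √(1.77^2) by rw [Real.sqrt_sq]; norm_num]
    exact Real.sqrt_le_sqrt (by nlinarith [Real.pi_gt_d6])
  have he : Real.exp 1 ≤ 2.7182818286 := Real.exp_one_lt_d9.le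
  have hexp4 : Real.exp 4 ≤ 32 * √π := by
    have : Real.exp 4 = (Real.exp 1) ^ 4 := by
      rw [← Real.exp_nat_mul]; norm_num
    rw [this]
    have h2 : (Real.exp 1)^4 ≤ 2.7182818286^4 :=
      pow_le_pow_left₀ (Real.exp_pos 1).le he 4
    nlinarith
  have hpos : (0:ℝ) < 32 * √π := by positivity
  have := Real.log_le_log (Real.exp_pos 4) hexp4
  rw [Real.log_exp, Real.log_mul (by norm_num) (by positivity),
    show (32:ℝ) = 2^5 by norm_num, Real.log_pow] at this
  push_cast at this
  linarith

lemma key (a b : ℕ) (ha : 2 ≤ a) (hab : a ≤ b) :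
    ((a:ℝ)+b)*Real.log ((a:ℝ)+b) - a*Real.log a - b*Real.log b
      - 0.5*Real.log a - 1.5*Real.log 2 ≤ Real.log ((a+b).choose a) := by
  set n := a + b with hn
  have hb : 2 ≤ b := le_trans ha hab
  have hn1 : 1 ≤ n := by omega
  have hn0 : (0:ℝ) < n := by exact_mod_cast hn1
  have ha0 : (0:ℝ) < a := by exact_mod_cast (show 0 < a by omega)
  have hb0 : (0:ℝ) < b := by exact_mod_cast (show 0 < b by omega)
  have hcast : ((n:ℕ):ℝ) = (a:ℝ) + b := by push_cast [hn]; ring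
  have hid : (n.factorial : ℝ) = (n.choose a) * a.factorial * b.factorial := by
    have := Nat.choose_mul_factorial_mul_factorial (show a ≤ n by omega)
    rw [show n - a = b by omega] at this
    exact_mod_cast this.symm
  have hcpos : (0:ℝ) < (n.choose a : ℝ) := by
    exact_mod_cast Nat.choose_pos (show a ≤ n by omega)
  have hfa : (0:ℝ) < a.factorial := by exact_mod_cast a.factorial_pos
  have hfb : (0:ℝ) < b.factorial := by exact_mod_cast b.factorial_pos
  have hlogid : Real.log (n.factorial)
      = Real.log (n.choose a) + Real.log a.factorial + Real.log b.factorial := by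
    rw [hid, Real.log_mul (by positivity) hfb.ne', Real.log_mul hcpos.ne' hfa.ne']
  have hLn : Real.log (√π) + (0.5*(Real.log 2 + Real.log n) + n*(Real.log n - 1))
      ≤ Real.log (n.factorial) := by
    have h := fact_ge n hn1
    have := Real.log_le_log (by positivity) h
    rwa [Real.log_mul (by positivity) (by positivity), log_term n hn1] at this
  have hLa : Real.log a.factorial
      ≤ (2 - 2*Real.log 2) + (0.5*(Real.log 2 + Real.log a) + a*(Real.log a - 1)) := by
    have h := fact_le a ha
    have := Real.log_le_log (by exact_mod_cast a.factorial_pos) h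
    rwa [Real.log_mul (by positivity) (by positivity), log_term a (by omega),
      Real.log_div (by positivity) (by norm_num), Real.log_pow, Real.log_exp,
      show (4:ℝ) = 2^2 by norm_num, Real.log_pow,
      show ((2:ℕ):ℝ)*1 - (2:ℕ)*Real.log 2 = 2 - 2*Real.log 2 by push_cast; ring] at this
  have hLb : Real.log b.factorial
      ≤ (2 - 2*Real.log 2) + (0.5*(Real.log 2 + Real.log b) + b*(Real.log b - 1)) := by
    have h := fact_le b hb
    have := Real.log_le_log (by exact_mod_cast b.factorial_pos) h
    rwa [Real.log_mul (by positivity) (by positivity), log_term b (by omega),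
      Real.log_div (by positivity) (by norm_num), Real.log_pow, Real.log_exp,
      show (4:ℝ) = 2^2 by norm_num, Real.log_pow,
      show ((2:ℕ):ℝ)*1 - (2:ℕ)*Real.log 2 = 2 - 2*Real.log 2 by push_cast; ring] at this
  have hbn : Real.log b ≤ Real.log n :=
    Real.log_le_log hb0 (by exact_mod_cast (show b ≤ n by omega))
  have h4 := numeric
  rw [← hcast]
  linarith [hlogid, hLn, hLa, hLb]

lemma key1 (b : ℕ) (hb : 1 ≤ b) :
    (1+(b:ℝ))*Real.log (1+(b:ℝ)) - 1*Real.log 1 - b*Real.log b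
      - 0.5*Real.log 1 - 1.5*Real.log 2 ≤ Real.log ((1+b).choose 1) := by
  have hb0 : (0:ℝ) < b := by exact_mod_cast hb
  have h1b : (0:ℝ) < 1 + (b:ℝ) := by positivity
  have hch : ((1+b).choose 1 : ℝ) = 1 + (b:ℝ) := by
    rw [Nat.choose_one_right]; push_cast; ring
  rw [hch, Real.log_one]
  have hlog : Real.log (1+(b:ℝ)) - Real.log b ≤ 1/b := by
    rw [← Real.log_div h1b.ne' hb0.ne']
    have := Real.log_le_sub_one_of_pos (show (0:ℝ) < (1+(b:ℝ))/b by positivity)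
    have heq : (1+(b:ℝ))/b - 1 = 1/b := by field_simp; ring
    linarith
  have hmul : (b:ℝ) * (Real.log (1+(b:ℝ)) - Real.log b) ≤ 1 := by
    have := mul_le_mul_of_nonneg_left hlog hb0.le
    rwa [mul_one_div, div_self hb0.ne'] at this
  have hlog2 : (0.6931471803:ℝ) < Real.log 2 := Real.log_two_gt_d9
  nlinarith [hmul, hlog2]

theorem stmt_2 (n d : ℕ) (hd : 0 < d) (hdn : 2 * d ≤ n) :
    Real.logb 2 (n.choose d) ≥
      (d : ℝ) * (Real.logb 2 ((n : ℝ) / d)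
          + ((n : ℝ) / d - 1) * Real.logb 2 (((n : ℝ) / d) / ((n : ℝ) / d - 1)))
        - 0.5 * Real.logb 2 d - 1.5 := by
  set b := n - d with hbdef
  have hnb : n = d + b := by omega
  have hb1 : 1 ≤ b := by omega
  have hd0 : (0:ℝ) < d := by exact_mod_cast hd
  have hn0 : (0:ℝ) < n := by exact_mod_cast (show 0 < n by omega)
  have hb0 : (0:ℝ) < b := by exact_mod_cast hb1
  have hcast : (n:ℝ) = (d:ℝ) + b := by rw [hnb]; push_cast; ring
  have hr1 : (n:ℝ)/d - 1 = (b:ℝ)/d := by rw [hcast]; field_simp; ring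
  have hrr : ((n:ℝ)/d)/((n:ℝ)/d - 1) = (n:ℝ)/b := by
    rw [hr1]; field_simp
  have hK : (d:ℝ)*(Real.log ((n:ℝ)/d) + ((n:ℝ)/d - 1)*Real.log (((n:ℝ)/d)/((n:ℝ)/d-1)))
      - 0.5*Real.log d - 1.5*Real.log 2 ≤ Real.log (n.choose d) := by
    have hKeq : (d:ℝ)*(Real.log ((n:ℝ)/d) + ((n:ℝ)/d - 1)*Real.log (((n:ℝ)/d)/((n:ℝ)/d-1)))
        - 0.5*Real.log d - 1.5*Real.log 2
        = ((d:ℝ)+b)*Real.log ((d:ℝ)+b) - d*Real.log d - b*Real.log b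
          - 0.5*Real.log d - 1.5*Real.log 2 := by
      rw [hrr, hr1, Real.log_div hn0.ne' hd0.ne', Real.log_div hn0.ne' hb0.ne', hcast]
      field_simp
      ring
    rw [hKeq, hnb]
    rcases eq_or_lt_of_le (show 1 ≤ d from hd) with h1 | h2
    · rw [← h1]
      have := key1 b hb1
      simpa using this
    · exact key d b (by omega) (by omega)
  have hlog2 : (0:ℝ) < Real.log 2 := Real.log_pos (by norm_num)
  rw [ge_iff_le, ← sub_nonneg]
  have hexpand : Real.logb 2 (n.choose d) -
      ((d : ℝ) * (Real.logb 2 ((n : ℝ) / d)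
          + ((n : ℝ) / d - 1) * Real.logb 2 (((n : ℝ) / d) / ((n : ℝ) / d - 1)))
        - 0.5 * Real.logb 2 d - 1.5)
      = (Real.log (n.choose d) -
          ((d:ℝ)*(Real.log ((n:ℝ)/d) + ((n:ℝ)/d - 1)*Real.log (((n:ℝ)/d)/((n:ℝ)/d-1)))
            - 0.5*Real.log d - 1.5*Real.log 2))/Real.log 2 := by
    simp only [Real.logb]
    field_simp
  rw [hexpand]
  exact div_nonneg (by linarith) hlog2.le
end

section
/- For every real number r with r > 21/8, one has (r − 1)·log₂(r/(r − 1)) > 1.1243. -/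
theorem stmt_4 (r : ℝ) (hr : r > 21 / 8) :
    (r - 1) * Real.logb 2 (r / (r - 1)) > 1.1243 := by
  have ht : r - 1 > 13 / 8 := by linarith
  have ht0 : (0:ℝ) < r - 1 := by linarith
  have hx : r / (r - 1) = 1 + 1 / (r - 1) := by field_simp; ring
  -- Bernoulli: (21/13)^((13/8)/(r-1)) ≤ 1 + 1/(r-1)
  have hp1 : (0:ℝ) ≤ (13/8) / (r - 1) := by positivity
  have hp2 : (13/8) / (r - 1) ≤ 1 := by
    rw [div_le_one ht0]; linarith
  have hB : ((1:ℝ) + 8/13) ^ ((13/8)/(r-1)) ≤ 1 + ((13/8)/(r-1)) * (8/13) :=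
    rpow_one_add_le_one_add_mul_self (by norm_num) hp1 hp2
  have hcoef : ((13/8)/(r-1)) * (8/13 : ℝ) = 1 / (r - 1) := by
    field_simp
  have hB' : ((21:ℝ)/13) ^ ((13/8)/(r-1)) ≤ 1 + 1 / (r - 1) := by
    rw [hcoef] at hB
    convert hB using 2
    norm_num
  have hlogle : ((13/8)/(r-1)) * Real.log (21/13) ≤ Real.log (1 + 1 / (r - 1)) := by
    rw [← Real.log_rpow (by norm_num : (0:ℝ) < 21/13)]
    exact Real.log_le_log (Real.rpow_pos_of_pos (by norm_num) _) hB'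
  -- numeric: log(21/13) > (2104/3041) * log 2
  have key : (2:ℕ)^2104 * 13^3041 < 21^3041 := by decide +kernel
  have h1 : ((2:ℝ))^(2104:ℕ) < ((21:ℝ)/13)^(3041:ℕ) := by
    rw [div_pow, lt_div_iff₀ (by positivity)]
    exact_mod_cast key
  have h2 := Real.log_lt_log (by positivity) h1
  rw [Real.log_pow, Real.log_pow] at h2
  have hlog2 : 0 < Real.log 2 := Real.log_pos one_lt_two
  -- combine
  have hmul : (13/8 : ℝ) * Real.log (21/13) ≤ (r - 1) * Real.log (1 + 1 / (r - 1)) := by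
    have := mul_le_mul_of_nonneg_left hlogle ht0.le
    calc (13/8 : ℝ) * Real.log (21/13)
        = (r - 1) * (((13/8)/(r-1)) * Real.log (21/13)) := by field_simp
      _ ≤ (r - 1) * Real.log (1 + 1 / (r - 1)) := this
  rw [gt_iff_lt, hx, Real.logb, ← mul_div_assoc, lt_div_iff₀ hlog2]
  clear key h1
  push_cast at h2
  linarith
end

section
/- For all real numbers n and d with n > 0 and 1 ≤ d ≤ n/4, one has 1.431·d·(log₂(n/d) + 1) ≤ 1.07325·n. -/
lemma aux_log_bound (x : ℝ) (hx : 4 ≤ x) :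
    Real.logb 2 x + 1 ≤ (3 / 4) * x := by
  have hx0 : (0:ℝ) < x := by linarith
  have hlog2 : Real.log 2 > 0.6931 := by
    have := Real.log_two_gt_d9
    linarith
  have h1 : Real.log (x / 4) ≤ x / 4 - 1 := by
    have := Real.add_one_le_exp (Real.log (x / 4))
    have h4 : (0:ℝ) < x / 4 := by linarith
    nlinarith [Real.exp_log h4]
  have h2 : Real.log x = Real.log (x / 4) + Real.log 4 := by
    rw [← Real.log_mul (by positivity) (by norm_num)]
    ring_nf
  have h4 : Real.log 4 = 2 * Real.log 2 := by
    rw [show (4:ℝ) = 2 ^ 2 by norm_num, Real.log_pow]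
    push_cast; ring
  have hlogx : Real.log x ≤ x / 4 - 1 + 2 * Real.log 2 := by
    rw [h2, h4]; linarith
  have hlb : Real.logb 2 x = Real.log x / Real.log 2 := rfl
  rw [hlb]
  rw [div_add' _ _ _ (by positivity), div_le_iff₀ (by positivity)]
  -- need log x + log 2 ≤ (3/4)x * log 2
  nlinarith [hlogx, hlog2]

theorem stmt_5 (n d : ℝ) (hn : n > 0) (hd1 : 1 ≤ d) (hd2 : d ≤ n / 4) :
    1.431 * d * (Real.logb 2 (n / d) + 1) ≤ 1.07325 * n := by
  have hd0 : (0:ℝ) < d := by linarith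
  have hx : 4 ≤ n / d := by
    rw [le_div_iff₀ hd0]; linarith
  have key := aux_log_bound (n / d) hx
  have h1 : 1.431 * d * (Real.logb 2 (n / d) + 1) ≤ 1.431 * d * ((3/4) * (n / d)) := by
    apply mul_le_mul_of_nonneg_left key (by positivity)
  have h2 : 1.431 * d * ((3/4) * (n / d)) = 1.07325 * n := by
    field_simp; ring
  linarith
end

section
/- For every real number d ≥ 1, one has (log₂ 5 − 0.688)·d − 0.5·(log₂ d)² − (log₂(5/3) + 1.5)·log₂ d > 0. -/
theorem stmt_7 (d : ℝ) (hd : 1 ≤ d) :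
    (Real.logb 2 5 - 0.688) * d - 0.5 * (Real.logb 2 d) ^ 2
      - (Real.logb 2 (5 / 3) + 1.5) * Real.logb 2 d > 0 := by
  have hd0 : (0:ℝ) < d := by linarith
  set x := Real.logb 2 d with hxdef
  have hx0 : 0 ≤ x := Real.logb_nonneg one_lt_two hd
  have hL : (0.693 : ℝ) ≤ Real.log 2 := by
    have := Real.log_two_gt_d9; norm_num at this ⊢; linarith
  have hL0 : 0 ≤ x * Real.log 2 := by positivity
  -- d = exp (x * log 2)
  have hdx : d = Real.exp (x * Real.log 2) := by
    have h1 : d = (2:ℝ) ^ x := (Real.rpow_logb two_pos (by norm_num) hd0).symm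
    rw [h1, Real.rpow_def_of_pos two_pos, mul_comm]
  -- Taylor lower bound for exp
  have hT : ∑ i ∈ Finset.range 6, (x * Real.log 2) ^ i / i.factorial
      ≤ Real.exp (x * Real.log 2) := Real.sum_le_exp_of_nonneg hL0 6
  have hsum : (1 : ℝ) + (x * Real.log 2) + (x * Real.log 2)^2/2 + (x * Real.log 2)^3/6
      + (x * Real.log 2)^4/24 + (x * Real.log 2)^5/120 ≤ d := by
    rw [hdx]
    refine le_trans (le_of_eq ?_) hT
    simp [Finset.sum_range_succ, Nat.factorial]
  -- replace log 2 by 0.693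
  have hpow : ∀ k : ℕ, (0.693 * x) ^ k ≤ (x * Real.log 2) ^ k := by
    intro k
    apply pow_le_pow_left₀ (by positivity)
    nlinarith
  have hd2 : (1 : ℝ) + (0.693*x) + (0.693*x)^2/2 + (0.693*x)^3/6
      + (0.693*x)^4/24 + (0.693*x)^5/120 ≤ d := by
    have h1 := hpow 1
    have h2 := hpow 2
    have h3 := hpow 3
    have h4 := hpow 4
    have h5 := hpow 5
    simp only [pow_one] at h1
    linarith [hsum]
  -- bounds on the logarithmic constants
  have hlog2pos : (0:ℝ) < Real.log 2 := Real.log_pos one_lt_two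
  have hc : (2.32 : ℝ) ≤ Real.logb 2 5 := by
    have hpow58 : ((2:ℝ))^(58:ℕ) ≤ 5^(25:ℕ) := by norm_num
    have := Real.log_le_log (by positivity) hpow58
    rw [Real.log_pow, Real.log_pow] at this
    push_cast at this
    rw [Real.logb, show (2.32:ℝ) = 58/25 by norm_num, div_le_div_iff₀ (by norm_num) hlog2pos]
    linarith
  have ha : Real.logb 2 (5/3) ≤ 31/42 := by
    have hpow42 : ((5/3:ℝ))^(42:ℕ) ≤ 2^(31:ℕ) := by norm_num
    have := Real.log_le_log (by positivity) hpow42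
    rw [Real.log_pow, Real.log_pow] at this
    push_cast at this
    rw [Real.logb, div_le_div_iff₀ hlog2pos (by norm_num)]
    linarith
  -- key polynomial inequality
  have hpoly : (1.632:ℝ) * ((1 : ℝ) + (0.693*x) + (0.693*x)^2/2 + (0.693*x)^3/6
      + (0.693*x)^4/24 + (0.693*x)^5/120) - 0.5*x^2 - 2.239*x > 0 := by
    nlinarith [sq_nonneg (x - 1.881), mul_nonneg hx0 (sq_nonneg (x - 1.881)),
      mul_nonneg (mul_nonneg hx0 hx0) (sq_nonneg (x - 1.881)),
      sq_nonneg (x*(x - 1.881)), mul_nonneg hx0 (sq_nonneg (x*(x-1.881)))]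
  have hpolpos : (0:ℝ) ≤ (1 : ℝ) + (0.693*x) + (0.693*x)^2/2 + (0.693*x)^3/6
      + (0.693*x)^4/24 + (0.693*x)^5/120 := by positivity
  have hcpos : (1.632:ℝ) ≤ Real.logb 2 5 - 0.688 := by linarith
  nlinarith [mul_le_mul_of_nonneg_left hd2 (le_trans (by norm_num) hcpos),
    mul_le_mul_of_nonneg_right hcpos hpolpos,
    mul_le_mul_of_nonneg_right ha hx0]
end

section
/- For every real number x ≥ 3, one has 1.431·(log₂(1 + 3·2^(x−3)) + 1.1242) ≥ x + 1. -/
theorem stmt_9 (x : ℝ) (hx : 3 ≤ x) :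
    1.431 * (Real.logb 2 (1 + 3 * (2 : ℝ) ^ (x - 3)) + 1.1242) ≥ x + 1 := by
  have h2 : (0:ℝ) < 2 ^ (x - 3) := Real.rpow_pos_of_pos (by norm_num) _
  have hpos : (0:ℝ) < 1 + 3 * 2 ^ (x - 3) := by positivity
  have key : ∀ r : ℝ, (2:ℝ) ^ (x - 3 + r) ≤ 1 + 3 * 2 ^ (x - 3) →
      x - 3 + r ≤ Real.logb 2 (1 + 3 * 2 ^ (x - 3)) := by
    intro r hr
    rw [Real.le_logb_iff_rpow_le (by norm_num) hpos]
    exact hr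
  have hsplit : ∀ r : ℝ, (2:ℝ) ^ (x - 3 + r) = 2 ^ (x - 3) * 2 ^ r := by
    intro r; rw [Real.rpow_add (by norm_num)]
  rcases le_total x 4 with h4 | h4
  · -- case 3 ≤ x ≤ 4 : use 2^(42/25) ≤ 7/2
    have hr : (2:ℝ) ^ ((42:ℝ)/25) ≤ 7/2 := by
      have hpow : ((2:ℝ) ^ ((42:ℝ)/25)) ^ (25:ℕ) = 2 ^ (42:ℕ) := by
        rw [← Real.rpow_natCast ((2:ℝ) ^ ((42:ℝ)/25)) 25, ← Real.rpow_mul (by norm_num)]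
        norm_num
      have h1 : ((2:ℝ) ^ ((42:ℝ)/25)) ^ (25:ℕ) ≤ ((7:ℝ)/2) ^ (25:ℕ) := by
        rw [hpow]; norm_num
      exact le_of_pow_le_pow_left₀ (by norm_num) (by norm_num) h1
    have hx4 : (2:ℝ) ^ (x - 3) ≤ 2 := by
      calc (2:ℝ) ^ (x - 3) ≤ 2 ^ (1:ℝ) := by
            apply Real.rpow_le_rpow_of_exponent_le (by norm_num) (by linarith)
        _ = 2 := Real.rpow_one 2
    have hb : (2:ℝ) ^ (x - 3 + 42/25) ≤ 1 + 3 * 2 ^ (x - 3) := by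
      rw [hsplit]
      nlinarith [h2]
    have hlog := key (42/25) hb
    linarith
  · -- case x ≥ 4 : use 2^(79/50) ≤ 3
    have hr : (2:ℝ) ^ ((79:ℝ)/50) ≤ 3 := by
      have hpow : ((2:ℝ) ^ ((79:ℝ)/50)) ^ (50:ℕ) = 2 ^ (79:ℕ) := by
        rw [← Real.rpow_natCast ((2:ℝ) ^ ((79:ℝ)/50)) 50, ← Real.rpow_mul (by norm_num)]
        norm_num
      have h1 : ((2:ℝ) ^ ((79:ℝ)/50)) ^ (50:ℕ) ≤ (3:ℝ) ^ (50:ℕ) := by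
        rw [hpow]; norm_num
      exact le_of_pow_le_pow_left₀ (by norm_num) (by norm_num) h1
    have hb : (2:ℝ) ^ (x - 3 + 79/50) ≤ 1 + 3 * 2 ^ (x - 3) := by
      rw [hsplit]
      nlinarith [h2]
    have hlog := key (79/50) hb
    linarith
end

section
/- For every real number x ≥ 6, one has 1.431·(log₂(1 + 3·2^(x−3)) + 1.1242) ≥ x + 2. -/
theorem stmt_10 (x : ℝ) (hx : 6 ≤ x) :
    1.431 * (Real.logb 2 (1 + 3 * (2 : ℝ) ^ (x - 3)) + 1.1242) ≥ x + 2 := by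
  have h3 : (2:ℝ) ^ (1.584:ℝ) ≤ 3 := by
    have hp : ((2:ℝ) ^ (1.584:ℝ)) ^ (125:ℕ) ≤ (3:ℝ) ^ (125:ℕ) := by
      rw [← Real.rpow_natCast ((2:ℝ) ^ (1.584:ℝ)) 125, ← Real.rpow_mul (by norm_num)]
      push_cast
      have : (1.584:ℝ) * 125 = ((198:ℕ):ℝ) := by norm_num
      rw [this, Real.rpow_natCast]
      norm_num
    exact le_of_pow_le_pow_left₀ (by norm_num) (by norm_num) hp
  have hkey : (2:ℝ) ^ (x - 1.416) ≤ 1 + 3 * (2:ℝ) ^ (x - 3) := by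
    have hx3 : (0:ℝ) < (2:ℝ) ^ (x - 3) := Real.rpow_pos_of_pos (by norm_num) _
    have : (2:ℝ) ^ (x - 1.416) = (2:ℝ) ^ (x - 3) * (2:ℝ) ^ (1.584:ℝ) := by
      rw [← Real.rpow_add (by norm_num)]; ring_nf
    rw [this]
    nlinarith [mul_le_mul_of_nonneg_left h3 hx3.le]
  have hlog : x - 1.416 ≤ Real.logb 2 (1 + 3 * (2:ℝ) ^ (x - 3)) := by
    have := Real.logb_le_logb_of_le (b := 2) (by norm_num) (Real.rpow_pos_of_pos (by norm_num) _) hkey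
    rwa [Real.logb_rpow (by norm_num) (by norm_num)] at this
  nlinarith [hlog]
end

section
/- For every real number x ≥ 3, one has 1.431·(log₂(1 + 5·2^(x−3)) + 1.1242) ≥ x + 2. -/
lemma two_rpow_le (c : ℝ) (a : ℝ) (n : ℕ) (m : ℕ) (hn : 0 < n) (ha : 0 ≤ a)
    (hc : c * n = m) (h : ((2:ℝ))^(m:ℕ) ≤ a^n) : (2:ℝ) ^ c ≤ a := by
  have h2 : (0:ℝ) ≤ (2:ℝ) ^ c := le_of_lt (Real.rpow_pos_of_pos two_pos c)
  have key : ((2:ℝ) ^ c) ^ n ≤ a ^ n := by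
    rw [← Real.rpow_natCast ((2:ℝ)^c) n, ← Real.rpow_mul (by norm_num), hc,
      Real.rpow_natCast]
    exact h
  exact le_of_pow_le_pow_left₀ hn.ne' ha key

lemma logb5 : (58:ℝ)/25 ≤ Real.logb 2 5 := by
  rw [Real.le_logb_iff_rpow_le one_lt_two (by norm_num)]
  apply two_rpow_le _ _ 25 58 (by norm_num) (by norm_num) (by norm_num)
  norm_num

lemma logb6 : (129:ℝ)/50 ≤ Real.logb 2 6 := by
  rw [Real.le_logb_iff_rpow_le one_lt_two (by norm_num)]
  apply two_rpow_le _ _ 50 129 (by norm_num) (by norm_num) (by norm_num)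
  norm_num

theorem stmt_11 (x : ℝ) (hx : 3 ≤ x) :
    1.431 * (Real.logb 2 (1 + 5 * (2 : ℝ) ^ (x - 3)) + 1.1242) ≥ x + 2 := by
  set t : ℝ := (2:ℝ) ^ (x - 3) with ht
  have ht0 : 0 < t := Real.rpow_pos_of_pos two_pos _
  have ht1 : 1 ≤ t := Real.one_le_rpow (by norm_num) (by linarith)
  rcases le_or_gt x 3.2 with h | h
  · have h6 : Real.logb 2 6 ≤ Real.logb 2 (1 + 5 * t) := by
      exact Real.logb_le_logb_of_le one_lt_two (by norm_num) (by linarith)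
    have := logb6
    nlinarith
  · have h5 : Real.logb 2 (5 * t) ≤ Real.logb 2 (1 + 5 * t) := by
      exact Real.logb_le_logb_of_le one_lt_two (by linarith) (by linarith)
    have heq : Real.logb 2 (5 * t) = Real.logb 2 5 + (x - 3) := by
      rw [Real.logb_mul (by norm_num) ht0.ne', ht, Real.logb_rpow two_pos (by norm_num)]
    have := logb5
    nlinarith
end

section
/- For every real number x ≥ 6, one has 1.431·(log₂(1 + 5·2^(x−3)) + 1.1242) ≥ x + 3. -/
lemma log2_5_ge : (9/4 : ℝ) ≤ Real.logb 2 5 := by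
  rw [Real.le_logb_iff_rpow_le one_lt_two (by norm_num)]
  by_contra h
  push_neg at h
  have h4 : ((2:ℝ) ^ ((9:ℝ)/4)) ^ (4:ℕ) = 2 ^ (9:ℕ) := by
    rw [← Real.rpow_natCast ((2:ℝ) ^ ((9:ℝ)/4)) 4, ← Real.rpow_mul (by norm_num)]
    norm_num
  have := pow_lt_pow_left₀ h (by norm_num : (0:ℝ) ≤ 5) (by norm_num : (4:ℕ) ≠ 0)
  rw [h4] at this
  norm_num at this

theorem stmt_12 (x : ℝ) (hx : 6 ≤ x) :
    1.431 * (Real.logb 2 (1 + 5 * (2 : ℝ) ^ (x - 3)) + 1.1242) ≥ x + 3 := by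
  have hp : (0:ℝ) < (2:ℝ) ^ (x - 3) := Real.rpow_pos_of_pos (by norm_num) _
  have h1 : Real.logb 2 (5 * (2:ℝ) ^ (x - 3)) ≤
      Real.logb 2 (1 + 5 * (2:ℝ) ^ (x - 3)) :=
    Real.logb_le_logb_of_le (by norm_num) (by positivity) (by linarith)
  have h2 : Real.logb 2 (5 * (2:ℝ) ^ (x - 3)) = Real.logb 2 5 + (x - 3) := by
    rw [Real.logb_mul (by norm_num) (ne_of_gt hp),
      Real.logb_rpow (by norm_num) (by norm_num)]
  have h3 := log2_5_ge
  nlinarith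
end

section
/- The function x ↦ 1.431·(log₂(1 + 3·2^(x−3)) + 1.1242) − (x + 1) is monotonically increasing on the interval [3, ∞) of real numbers. -/
private lemma hd14 (x : ℝ) :
    HasDerivAt
      (fun x : ℝ => 1.431 * (Real.logb 2 (1 + 3 * (2 : ℝ) ^ (x - 3)) + 1.1242) - (x + 1))
      (1.431 * (3 * (2 : ℝ) ^ (x - 3)) / (1 + 3 * (2 : ℝ) ^ (x - 3)) - 1) x := by
  have hpos : (0 : ℝ) < (2 : ℝ) ^ (x - 3) := Real.rpow_pos_of_pos (by norm_num) _
  have hgpos : (0 : ℝ) < 1 + 3 * (2 : ℝ) ^ (x - 3) := by positivity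
  have h1 : HasDerivAt (fun y : ℝ => (2 : ℝ) ^ (y - 3))
      ((2 : ℝ) ^ (x - 3) * Real.log 2) x := by
    have := (Real.hasStrictDerivAt_const_rpow (a := 2) (by norm_num) (x - 3)).hasDerivAt
    have h := this.comp x ((hasDerivAt_id x).sub_const 3)
    simpa [Function.comp_def] using h
  have h2 : HasDerivAt (fun y : ℝ => 1 + 3 * (2 : ℝ) ^ (y - 3))
      (3 * ((2 : ℝ) ^ (x - 3) * Real.log 2)) x := (h1.const_mul 3).const_add 1
  have h3 : HasDerivAt (fun y : ℝ => Real.log (1 + 3 * (2 : ℝ) ^ (y - 3)))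
      ((3 * ((2 : ℝ) ^ (x - 3) * Real.log 2)) / (1 + 3 * (2 : ℝ) ^ (x - 3))) x := by
    have := (Real.hasDerivAt_log hgpos.ne').comp x h2
    simpa [div_eq_inv_mul, mul_comm, Function.comp_def] using this
  have h4 : HasDerivAt
      (fun y : ℝ => 1.431 * (Real.logb 2 (1 + 3 * (2 : ℝ) ^ (y - 3)) + 1.1242) - (y + 1))
      (1.431 * ((3 * ((2 : ℝ) ^ (x - 3) * Real.log 2)) / (1 + 3 * (2 : ℝ) ^ (x - 3)) / Real.log 2 + 0) - (1 + 0)) x := by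
    simp only [Real.logb, Real.log_div]
    have := ((((h3.div_const (Real.log 2)).add_const 1.1242).const_mul 1.431).sub
      ((hasDerivAt_id x).add_const 1))
    simpa [Pi.sub_def] using this
  convert h4 using 1
  have hlog : Real.log 2 ≠ 0 := by
    have := Real.log_pos (by norm_num : (1:ℝ) < 2); linarith
  field_simp
  ring

theorem stmt_14 :
    MonotoneOn
      (fun x : ℝ => 1.431 * (Real.logb 2 (1 + 3 * (2 : ℝ) ^ (x - 3)) + 1.1242) - (x + 1))
      (Set.Ici 3) := by
  have hdiff : Differentiable ℝ
      (fun x : ℝ => 1.431 * (Real.logb 2 (1 + 3 * (2 : ℝ) ^ (x - 3)) + 1.1242) - (x + 1)) :=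
    fun x => (hd14 x).differentiableAt
  apply monotoneOn_of_deriv_nonneg (convex_Ici 3) hdiff.continuous.continuousOn
    (fun x _ => (hdiff x).differentiableWithinAt)
  intro x hx
  rw [interior_Ici] at hx
  rw [(hd14 x).deriv]
  have ht : (1 : ℝ) ≤ (2 : ℝ) ^ (x - 3) :=
    Real.one_le_rpow (by norm_num) (by linarith [(Set.mem_Ioi.mp hx).le])
  have hgpos : (0 : ℝ) < 1 + 3 * (2 : ℝ) ^ (x - 3) := by linarith
  rw [sub_nonneg, le_div_iff₀ hgpos]
  nlinarith
end
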